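/- For 0 < q < 1 and natural numbers n, m ≥ 2, the modified q-multiple zeta values satisfy the quasi-shuffle identity: \bar{z}_q(n)·\bar{z}_q(m) = \bar{z}_q(n,m) + \bar{z}_q(m,n) + \bar{z}_q(n+m) − \bar{z}_q(n,m−1) − \bar{z}_q(m,n−1) − \bar{z}_q(n+m−1), where here the unmodified relation for \bar{z}_q uses the identity q^{l_1+l_2} = q^{l_1} − q^{l_1}(1−q^{l_2}). -/

import Mathlib

set_option maxHeartbeats 1000000

/-- Modified qMZV of length one: `z̄_q(n) = ∑_{m>0} qᵐ/(1−qᵐ)ⁿ`. -/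
noncomputable def zbar1 (q : ℝ) (n : ℕ) : ℝ := ∑' m : ℕ, q ^ (m + 1) / (1 - q ^ (m + 1)) ^ n

/-- Modified qMZV of length two:
`z̄_q(a,b) = ∑_{m₁>m₂>0} q^{m₁}/((1−q^{m₁})ᵃ (1−q^{m₂})ᵇ)`. -/
noncomputable def zbar2 (q : ℝ) (a b : ℕ) : ℝ :=
  ∑' p : ℕ × ℕ, if p.2 < p.1 ∧ 0 < p.2 then
    q ^ p.1 / ((1 - q ^ p.1) ^ a * (1 - q ^ p.2) ^ b) else 0

section Aux

variable {q : ℝ}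

/-- strict-region summand for `zbar2`, on shifted indices -/
noncomputable def Tgt (q : ℝ) (a b : ℕ) (p : ℕ × ℕ) : ℝ :=
  if p.2 < p.1 then q ^ (p.1 + 1) / ((1 - q ^ (p.1 + 1)) ^ a * (1 - q ^ (p.2 + 1)) ^ b) else 0

/-- diagonal summand -/
noncomputable def Dg (q : ℝ) (a : ℕ) (p : ℕ × ℕ) : ℝ :=
  if p.1 = p.2 then q ^ (p.1 + 1) / (1 - q ^ (p.1 + 1)) ^ a else 0

lemma one_sub_pow_pos (hq0 : 0 < q) (hq1 : q < 1) (k : ℕ) : 0 < 1 - q ^ (k + 1) := by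
  have : q ^ (k + 1) < 1 := pow_lt_one₀ hq0.le hq1 (Nat.succ_ne_zero k)
  linarith

lemma pow_denom_le (hq0 : 0 < q) (hq1 : q < 1) (a k : ℕ) :
    (1 - q) ^ a ≤ (1 - q ^ (k + 1)) ^ a := by
  have h1 : q ^ (k + 1) ≤ q := pow_le_of_le_one hq0.le hq1.le (Nat.succ_ne_zero k)
  exact pow_le_pow_left₀ (by linarith) (by linarith) a

lemma term_nonneg (hq0 : 0 < q) (hq1 : q < 1) (a k : ℕ) :
    0 ≤ q ^ (k + 1) / (1 - q ^ (k + 1)) ^ a :=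
  div_nonneg (pow_nonneg hq0.le _) (pow_nonneg (one_sub_pow_pos hq0 hq1 k).le _)

lemma term_le (hq0 : 0 < q) (hq1 : q < 1) (a k : ℕ) :
    q ^ (k + 1) / (1 - q ^ (k + 1)) ^ a ≤ q ^ (k + 1) / (1 - q) ^ a :=
  div_le_div_of_nonneg_left (pow_nonneg hq0.le _)
    (pow_pos (by linarith) _) (pow_denom_le hq0 hq1 a k)

lemma sum_geom_shift (hq0 : 0 < q) (hq1 : q < 1) (C : ℝ) :
    Summable (fun l : ℕ => q ^ (l + 1) / C) := by
  have : Summable (fun l : ℕ => q ^ l * (q / C)) :=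
    (summable_geometric_of_lt_one hq0.le hq1).mul_right _
  refine this.congr fun l => ?_
  rw [pow_succ]; ring

lemma sum1 (hq0 : 0 < q) (hq1 : q < 1) (a : ℕ) :
    Summable (fun l : ℕ => q ^ (l + 1) / (1 - q ^ (l + 1)) ^ a) :=
  Summable.of_nonneg_of_le (fun l => term_nonneg hq0 hq1 a l)
    (fun l => term_le hq0 hq1 a l) (sum_geom_shift hq0 hq1 _)

lemma zbar1_eq_diag (hq0 : 0 < q) (hq1 : q < 1) (a : ℕ) :
    zbar1 q a = ∑' p : ℕ × ℕ, Dg q a p := by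
  have hinj : Function.Injective (fun l : ℕ => ((l, l) : ℕ × ℕ)) := by
    intro x y h; simpa using congrArg Prod.fst h
  have hsupp : Function.support (Dg q a) ⊆ Set.range (fun l : ℕ => ((l, l) : ℕ × ℕ)) := by
    intro p hp
    have : p.1 = p.2 := by by_contra h; simp [Dg, h] at hp
    exact ⟨p.1, by simp [Prod.ext_iff, this]⟩
  have := hinj.tsum_eq (f := Dg q a) hsupp
  rw [← this, zbar1]
  exact tsum_congr fun l => by simp [Dg]

lemma sumDg (hq0 : 0 < q) (hq1 : q < 1) (a : ℕ) : Summable (Dg q a) := by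
  have hinj : Function.Injective (fun l : ℕ => ((l, l) : ℕ × ℕ)) := by
    intro x y h; simpa using congrArg Prod.fst h
  have hsupp : ∀ p ∉ Set.range (fun l : ℕ => ((l, l) : ℕ × ℕ)), Dg q a p = 0 := by
    intro p hp
    have : p.1 ≠ p.2 := by
      intro h; exact hp ⟨p.1, by simp [Prod.ext_iff, h]⟩
    simp [Dg, this]
  refine (hinj.summable_iff hsupp).mp ?_
  refine (sum1 hq0 hq1 a).congr fun l => ?_
  simp [Dg, Function.comp]

lemma Tgt_nonneg (hq0 : 0 < q) (hq1 : q < 1) (a b : ℕ) (p : ℕ × ℕ) : 0 ≤ Tgt q a b p := by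
  unfold Tgt
  split
  · exact div_nonneg (pow_nonneg hq0.le _)
      (mul_nonneg (pow_nonneg (one_sub_pow_pos hq0 hq1 _).le _)
        (pow_nonneg (one_sub_pow_pos hq0 hq1 _).le _))
  · exact le_refl 0

lemma sumTgt (hq0 : 0 < q) (hq1 : q < 1) (a b : ℕ) : Summable (Tgt q a b) := by
  have hinj : Function.Injective (fun x : ℕ × ℕ => ((x.2 + x.1 + 1, x.2) : ℕ × ℕ)) := by
    intro x y h
    rw [Prod.ext_iff] at h ⊢
    obtain ⟨h1, h2⟩ := h
    simp only at h1 h2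
    omega
  have hsupp : ∀ p ∉ Set.range (fun x : ℕ × ℕ => ((x.2 + x.1 + 1, x.2) : ℕ × ℕ)),
      Tgt q a b p = 0 := by
    intro p hp
    have : ¬ p.2 < p.1 := by
      intro h
      exact hp ⟨(p.1 - p.2 - 1, p.2), by simp [Prod.ext_iff]; omega⟩
    simp [Tgt, this]
  refine (hinj.summable_iff hsupp).mp ?_
  have hmaj : Summable (fun x : ℕ × ℕ => (q ^ (x.1 + 1)) * (q ^ (x.2 + 1) / (1 - q) ^ (a + b))) :=
    Summable.mul_of_nonneg (f := fun l : ℕ => q ^ (l + 1))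
      (g := fun l : ℕ => q ^ (l + 1) / (1 - q) ^ (a + b))
      ((sum_geom_shift hq0 hq1 1).congr fun l => by simp)
      (sum_geom_shift hq0 hq1 _)
      (fun l => pow_nonneg hq0.le _)
      (fun l => div_nonneg (pow_nonneg hq0.le _) (pow_nonneg (by linarith) _))
  refine Summable.of_nonneg_of_le (fun x => Tgt_nonneg hq0 hq1 a b _) (fun x => ?_) hmaj
  have hlt : x.2 < x.2 + x.1 + 1 := by omega
  show Tgt q a b (x.2 + x.1 + 1, x.2) ≤ _
  simp only [Tgt, if_pos hlt]
  have hA := one_sub_pow_pos hq0 hq1 (x.2 + x.1 + 1)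
  have hB := one_sub_pow_pos hq0 hq1 x.2
  have hd : (1 - q) ^ (a + b) ≤ (1 - q ^ (x.2 + x.1 + 1 + 1)) ^ a * (1 - q ^ (x.2 + 1)) ^ b := by
    rw [pow_add]
    exact mul_le_mul (pow_denom_le hq0 hq1 a _) (pow_denom_le hq0 hq1 b _)
      (pow_nonneg (by linarith) _) (pow_nonneg hA.le _)
  calc q ^ (x.2 + x.1 + 1 + 1) / ((1 - q ^ (x.2 + x.1 + 1 + 1)) ^ a * (1 - q ^ (x.2 + 1)) ^ b)
      ≤ q ^ (x.2 + x.1 + 1 + 1) / (1 - q) ^ (a + b) :=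
        div_le_div_of_nonneg_left (pow_nonneg hq0.le _) (pow_pos (by linarith) _) hd
    _ = q ^ (x.1 + 1) * (q ^ (x.2 + 1) / (1 - q) ^ (a + b)) := by
        have he : x.1 + 1 + (x.2 + 1) = x.2 + x.1 + 1 + 1 := by omega
        rw [mul_div_assoc', ← pow_add, he]

lemma zbar2_eq_Tgt (hq0 : 0 < q) (hq1 : q < 1) (a b : ℕ) :
    zbar2 q a b = ∑' p : ℕ × ℕ, Tgt q a b p := by
  set f : ℕ × ℕ → ℝ := fun p => if p.2 < p.1 ∧ 0 < p.2 then
    q ^ p.1 / ((1 - q ^ p.1) ^ a * (1 - q ^ p.2) ^ b) else 0 with hf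
  set g : ℕ × ℕ → ℕ × ℕ := fun x => (x.1 + 1, x.2 + 1) with hg
  have hinj : Function.Injective g := by
    intro x y h
    rw [Prod.ext_iff] at h ⊢
    simp only [hg] at h
    omega
  have hsupp : Function.support f ⊆ Set.range g := by
    intro p hp
    have hc : p.2 < p.1 ∧ 0 < p.2 := by
      by_contra h; simp [hf, h] at hp
    exact ⟨(p.1 - 1, p.2 - 1), by simp [hg, Prod.ext_iff]; omega⟩
  have := hinj.tsum_eq (f := f) hsupp
  rw [zbar2, ← hf, ← this]
  refine tsum_congr fun x => ?_
  by_cases h : x.2 < x.1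
  · simp [hf, hg, Tgt, h, Nat.succ_lt_succ h]
  · simp [hf, hg, Tgt, h]

end Aux

/-- Quasi-shuffle identity for the modified qMZVs. -/
theorem zbar_quasi_shuffle (q : ℝ) (hq0 : 0 < q) (hq1 : q < 1) (n m : ℕ)
    (hn : 2 ≤ n) (hm : 2 ≤ m) :
    zbar1 q n * zbar1 q m =
      zbar2 q n m + zbar2 q m n + zbar1 q (n + m)
        - zbar2 q n (m - 1) - zbar2 q m (n - 1) - zbar1 q (n + m - 1) := by
  obtain ⟨n, rfl⟩ : ∃ n', n = n' + 2 := ⟨n - 2, by omega⟩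
  obtain ⟨m, rfl⟩ : ∃ m', m = m' + 2 := ⟨m - 2, by omega⟩
  -- normalize nat subtractions
  have e1 : n + 2 + (m + 2) = n + m + 4 := by ring
  have e2 : n + m + 4 - 1 = n + m + 3 := by omega
  have e3 : m + 2 - 1 = m + 1 := by omega
  have e4 : n + 2 - 1 = n + 1 := by omega
  rw [e1, e2, e3, e4]
  -- summand abbreviations
  set F : ℕ × ℕ → ℝ := fun p =>
    (q ^ (p.1 + 1) / (1 - q ^ (p.1 + 1)) ^ (n + 2)) *
      (q ^ (p.2 + 1) / (1 - q ^ (p.2 + 1)) ^ (m + 2)) with hF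
  have hFs : Summable F :=
    Summable.mul_of_nonneg (sum1 hq0 hq1 _) (sum1 hq0 hq1 _)
      (fun l => term_nonneg hq0 hq1 _ l) (fun l => term_nonneg hq0 hq1 _ l)
  have hlhs : zbar1 q (n + 2) * zbar1 q (m + 2) = ∑' p : ℕ × ℕ, F p :=
    Summable.tsum_mul_tsum (sum1 hq0 hq1 _) (sum1 hq0 hq1 _) hFs
  -- swapped sums
  have hswap : ∀ a b : ℕ, zbar2 q a b = ∑' p : ℕ × ℕ, Tgt q a b p.swap := by
    intro a b
    rw [zbar2_eq_Tgt hq0 hq1]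
    exact ((Equiv.prodComm ℕ ℕ).tsum_eq (Tgt q a b)).symm
  have hswapS : ∀ a b : ℕ, Summable (fun p : ℕ × ℕ => Tgt q a b p.swap) := by
    intro a b
    exact (sumTgt hq0 hq1 a b).prod_symm
  rw [hlhs, zbar2_eq_Tgt hq0 hq1 (n + 2) (m + 2), hswap (m + 2) (n + 2),
    zbar2_eq_Tgt hq0 hq1 (n + 2) (m + 1), hswap (m + 2) (n + 1),
    zbar1_eq_diag hq0 hq1 (n + m + 4), zbar1_eq_diag hq0 hq1 (n + m + 3)]
  rw [← Summable.tsum_add (sumTgt hq0 hq1 _ _) (hswapS _ _),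
    ← Summable.tsum_add ((sumTgt hq0 hq1 _ _).add (hswapS _ _)) (sumDg hq0 hq1 _),
    ← Summable.tsum_sub (((sumTgt hq0 hq1 _ _).add (hswapS _ _)).add (sumDg hq0 hq1 _)) (sumTgt hq0 hq1 _ _),
    ← Summable.tsum_sub ((((sumTgt hq0 hq1 _ _).add (hswapS _ _)).add (sumDg hq0 hq1 _)).sub (sumTgt hq0 hq1 _ _)) (hswapS _ _),
    ← Summable.tsum_sub (((((sumTgt hq0 hq1 _ _).add (hswapS _ _)).add (sumDg hq0 hq1 _)).sub (sumTgt hq0 hq1 _ _)).sub (hswapS _ _)) (sumDg hq0 hq1 _)]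
  refine tsum_congr fun p => ?_
  obtain ⟨x, y⟩ := p
  have hA := one_sub_pow_pos hq0 hq1 x
  have hB := one_sub_pow_pos hq0 hq1 y
  rcases lt_trichotomy y x with h | h | h
  · -- y < x : T(n,m) region
    have h1 : ¬ x < y := by omega
    have h2 : x ≠ y := by omega
    simp only [hF, Tgt, Dg, Prod.swap, if_pos h, if_neg h1, if_neg h2]
    set A := 1 - q ^ (x + 1) with hAd
    set B := 1 - q ^ (y + 1) with hBd
    have hq2 : q ^ (y + 1) = 1 - B := by rw [hBd]; ring
    rw [hq2]
    field_simp
    ring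
  · -- diagonal
    subst h
    have h1 : ¬ y < y := lt_irrefl y
    simp only [hF, Tgt, Dg, Prod.swap, if_pos rfl, if_neg h1, if_true]
    set A := 1 - q ^ (y + 1) with hAd
    have hq2 : q ^ (y + 1) = 1 - A := by rw [hAd]; ring
    rw [hq2]
    field_simp
    ring
  · -- x < y : swapped region
    have h1 : ¬ y < x := by omega
    have h2 : x ≠ y := by omega
    simp only [hF, Tgt, Dg, Prod.swap, if_pos h, if_neg h1, if_neg h2]
    set A := 1 - q ^ (x + 1) with hAd
    set B := 1 - q ^ (y + 1) with hBd
    have hq2 : q ^ (x + 1) = 1 - A := by rw [hAd]; ring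
    rw [hq2]
    field_simp
    ring
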